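/- With K = ε/√(1−λ) and ε > 0 fixed, as λ ↑ 1 one has ∫_0^K ∫_0^K r⁴ s² dr ds / [(1+r²)²(1+s)²(1+r²+s²)] ∼ (π/2)·log K ∼ (π/4)·log(1/(1−λ)). -/

import Mathlib

open Filter Real intervalIntegral MeasureTheory

/-- The double integral appearing in the computation of `κ₁`. -/
noncomputable def I17 (K : ℝ) : ℝ :=
  ∫ r in (0 : ℝ)..K, ∫ s in (0 : ℝ)..K,
    r ^ 4 * s ^ 2 / ((1 + r ^ 2) ^ 2 * (1 + s) ^ 2 * (1 + r ^ 2 + s ^ 2))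

noncomputable def wfun (r : ℝ) : ℝ := r ^ 4 / (1 + r ^ 2) ^ 2
noncomputable def inn (K r : ℝ) : ℝ :=
  ∫ s in (0:ℝ)..K, s ^ 2 / ((1 + |s|) ^ 2 * (1 + r ^ 2 + s ^ 2))

lemma inn_cont (K : ℝ) : Continuous (fun r => wfun r * inn K r) := by
  apply Continuous.mul
  · unfold wfun
    exact (continuous_pow 4).div ((continuous_const.add (continuous_pow 2)).pow 2)
      (fun r => by positivity)
  · unfold inn
    apply continuous_parametric_intervalIntegral_of_continuous'
      (f := fun r s => s ^ 2 / ((1 + |s|) ^ 2 * (1 + r ^ 2 + s ^ 2)))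
    apply Continuous.div
    · fun_prop
    · fun_prop
    · rintro ⟨r, s⟩
      have h1 : (0:ℝ) < (1 + |s|) ^ 2 := by positivity
      have h2 : (0:ℝ) < 1 + r ^ 2 + s ^ 2 := by positivity
      positivity

lemma I17_eq (K : ℝ) (hK : 0 ≤ K) : I17 K = ∫ r in (0:ℝ)..K, wfun r * inn K r := by
  unfold I17
  apply integral_congr
  intro r _
  simp only
  unfold inn wfun
  rw [← intervalIntegral.integral_const_mul]
  apply integral_congr
  intro s hs
  rw [Set.uIcc_of_le hK] at hs
  simp only
  rw [abs_of_nonneg hs.1]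
  field_simp

lemma ftc_arctan {c : ℝ} (hc : 0 < c) (K : ℝ) :
    ∫ s in (0:ℝ)..K, (c + s^2)⁻¹ = (Real.sqrt c)⁻¹ * arctan (K / Real.sqrt c) := by
  have hsc : 0 < Real.sqrt c := Real.sqrt_pos.2 hc
  have hsq : Real.sqrt c ^ 2 = c := Real.sq_sqrt hc.le
  have h : ∀ s ∈ Set.uIcc (0:ℝ) K,
      HasDerivAt (fun x => (Real.sqrt c)⁻¹ * arctan (x / Real.sqrt c)) ((c + s^2)⁻¹) s := by
    intro s _
    have h1 : HasDerivAt (fun x : ℝ => x / Real.sqrt c) ((Real.sqrt c)⁻¹) s := by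
      simpa [div_eq_mul_inv] using (hasDerivAt_id s).mul_const (Real.sqrt c)⁻¹
    have h2 := (Real.hasDerivAt_arctan (s / Real.sqrt c)).comp s h1
    have h3 := h2.const_mul (Real.sqrt c)⁻¹
    refine h3.congr_deriv ?_
    rw [div_pow, hsq]
    field_simp
    exact hsq.symm
  have hint : IntervalIntegrable (fun s => (c + s^2)⁻¹) MeasureTheory.volume 0 K := by
    apply Continuous.intervalIntegrable
    have : ∀ s : ℝ, c + s^2 ≠ 0 := fun s => by positivity
    exact continuous_const.add (continuous_pow 2) |>.inv₀ this
  rw [integral_eq_sub_of_hasDerivAt h hint]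
  simp
  try ring

lemma ftc_32 (K : ℝ) (hK : 0 ≤ K) :
    ∫ s in (0:ℝ)..K, ((1+s) * Real.sqrt (1+s))⁻¹ = 2 - 2 * (Real.sqrt (1+K))⁻¹ := by
  have h : ∀ s ∈ Set.uIcc (0:ℝ) K,
      HasDerivAt (fun x => -2 * (Real.sqrt (1+x))⁻¹) (((1+s) * Real.sqrt (1+s))⁻¹) s := by
    intro s hs
    rw [Set.uIcc_of_le hK] at hs
    have hs0 : 0 ≤ s := hs.1
    have h1pos : (0:ℝ) < 1 + s := by linarith
    have hsqp : 0 < Real.sqrt (1+s) := Real.sqrt_pos.2 h1pos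
    have h1 : HasDerivAt (fun x : ℝ => Real.sqrt (1+x)) (1 / (2 * Real.sqrt (1+s))) s := by
      have := (Real.hasDerivAt_sqrt (x := 1+s) (by positivity)).comp s
        ((hasDerivAt_const s (1:ℝ)).add (hasDerivAt_id s))
      exact this.congr_deriv (by ring)
    have h2 := (h1.inv (ne_of_gt hsqp)).const_mul (-2 : ℝ)
    refine h2.congr_deriv ?_
    have : Real.sqrt (1+s) ^ 2 = 1 + s := Real.sq_sqrt h1pos.le
    field_simp
    exact this.symm
  have hint : IntervalIntegrable (fun s => ((1+s) * Real.sqrt (1+s))⁻¹) MeasureTheory.volume 0 K := by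
    apply ContinuousOn.intervalIntegrable
    apply ContinuousOn.inv₀
    · exact (continuousOn_const.add continuousOn_id).mul
        ((continuousOn_const.add continuousOn_id).sqrt)
    · intro s hs
      rw [Set.uIcc_of_le hK] at hs
      have : (0:ℝ) < 1 + s := by linarith [hs.1]
      positivity
  rw [integral_eq_sub_of_hasDerivAt h hint]
  simp
  try ring

lemma ftc_log (K : ℝ) : ∫ r in (0:ℝ)..K, r / (1+r^2) = 1/2 * Real.log (1+K^2) := by
  have h : ∀ r ∈ Set.uIcc (0:ℝ) K,
      HasDerivAt (fun x => 1/2 * Real.log (1+x^2)) (r / (1+r^2)) r := by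
    intro r _
    have hne : (1:ℝ) + r^2 ≠ 0 := by positivity
    have h1 : HasDerivAt (fun x : ℝ => 1 + x^2) (2*r) r := by
      exact ((hasDerivAt_const r (1:ℝ)).add ((hasDerivAt_pow 2 r))).congr_deriv (by simp)
    have h2 := (h1.log hne).const_mul (1/2 : ℝ)
    refine h2.congr_deriv ?_
    field_simp
    try ring
  have hint : IntervalIntegrable (fun r => r / (1+r^2)) MeasureTheory.volume 0 K := by
    apply Continuous.intervalIntegrable
    exact continuous_id.div (continuous_const.add (continuous_pow 2)) (fun r => by positivity)
  rw [integral_eq_sub_of_hasDerivAt h hint]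
  simp
  try ring

lemma ftc_q (K : ℝ) : ∫ r in (0:ℝ)..K, 3*r / (1+r^2)^2 = 3/2 * (1 - (1+K^2)⁻¹) := by
  have h : ∀ r ∈ Set.uIcc (0:ℝ) K,
      HasDerivAt (fun x => -3/2 * (1+x^2)⁻¹) (3*r / (1+r^2)^2) r := by
    intro r _
    have hne : (1:ℝ) + r^2 ≠ 0 := by positivity
    have h1 : HasDerivAt (fun x : ℝ => 1 + x^2) (2*r) r := by
      exact ((hasDerivAt_const r (1:ℝ)).add ((hasDerivAt_pow 2 r))).congr_deriv (by simp)
    have h2 := (h1.inv hne).const_mul (-3/2 : ℝ)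
    refine h2.congr_deriv ?_
    field_simp
    try ring
  have hint : IntervalIntegrable (fun r => 3*r / (1+r^2)^2) MeasureTheory.volume 0 K := by
    apply Continuous.intervalIntegrable
    exact (continuous_const.mul continuous_id).div
      ((continuous_const.add (continuous_pow 2)).pow 2) (fun r => by positivity)
  rw [integral_eq_sub_of_hasDerivAt h hint]
  simp
  try ring

-- pointwise algebraic bound for the cross term
lemma cross_bound {r s : ℝ} (hr : 0 ≤ r) (hs : 0 ≤ s) :
    ((1+s) * (1+r^2+s^2))⁻¹ ≤ 3 * ((1+r) * Real.sqrt (1+r))⁻¹ * ((1+s) * Real.sqrt (1+s))⁻¹ := by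
  set a := Real.sqrt (1+r) with ha
  set b := Real.sqrt (1+s) with hb
  have hap : 0 < a := Real.sqrt_pos.2 (by linarith)
  have hbp : 0 < b := Real.sqrt_pos.2 (by linarith)
  have ha2 : a^2 = 1 + r := Real.sq_sqrt (by linarith)
  have hb2 : b^2 = 1 + s := Real.sq_sqrt (by linarith)
  have hpoly : (1+r)^3*(1+s) ≤ 9*(1+r^2+s^2)^2 := by
    nlinarith [sq_nonneg (r-1), sq_nonneg (s-1), sq_nonneg (r*s-1), sq_nonneg (r-s),
      sq_nonneg (r+s), sq_nonneg (r*r - s), sq_nonneg r, sq_nonneg s, mul_nonneg hr hs,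
      sq_nonneg (r*s - r), sq_nonneg (r^2 - 1)]
  have key : (1+r)*a*b ≤ 3*(1+r^2+s^2) := by
    have h0 : 0 ≤ (1+r)*a*b := by positivity
    have h1 : 0 ≤ 3*(1+r^2+s^2) := by positivity
    have h2 : ((1+r)*a*b)^2 ≤ (3*(1+r^2+s^2))^2 := by
      have e : ((1+r)*a*b)^2 = (1+r)^2*a^2*b^2 := by ring
      rw [e, ha2, hb2]
      nlinarith [hpoly]
    calc (1+r)*a*b = Real.sqrt (((1+r)*a*b)^2) := (Real.sqrt_sq h0).symm
      _ ≤ Real.sqrt ((3*(1+r^2+s^2))^2) := Real.sqrt_le_sqrt h2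
      _ = 3*(1+r^2+s^2) := Real.sqrt_sq h1
  rw [mul_assoc, ← mul_inv, ← div_eq_mul_inv, inv_eq_one_div,
    div_le_div_iff₀ (by positivity) (by positivity)]
  have hmul := mul_le_mul_of_nonneg_left key (by linarith : (0:ℝ) ≤ 1 + s)
  nlinarith [hmul]

-- upper pointwise: integrand ≤ 1/(c+s²)
lemma ptwise_upper {r s : ℝ} (hs : 0 ≤ s) :
    s ^ 2 / ((1 + |s|) ^ 2 * (1 + r ^ 2 + s ^ 2)) ≤ (1 + r ^ 2 + s ^ 2)⁻¹ := by
  rw [abs_of_nonneg hs]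
  have hd : (0:ℝ) < 1 + r^2 + s^2 := by positivity
  have h1 : (0:ℝ) < (1+s)^2 := by positivity
  rw [div_le_iff₀ (by positivity), inv_mul_eq_div, le_div_iff₀ hd]
  nlinarith [sq_nonneg s, hd]

-- lower pointwise: 1/(c+s²) − 2/((1+s)(c+s²)) ≤ integrand
lemma ptwise_lower {r s : ℝ} (hs : 0 ≤ s) :
    (1 + r ^ 2 + s ^ 2)⁻¹ - 2 * ((1+s) * (1 + r ^ 2 + s ^ 2))⁻¹
      ≤ s ^ 2 / ((1 + |s|) ^ 2 * (1 + r ^ 2 + s ^ 2)) := by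
  rw [abs_of_nonneg hs]
  have hd : (0:ℝ) < 1 + r^2 + s^2 := by positivity
  have h1 : (0:ℝ) < 1+s := by positivity
  have key : s ^ 2 / ((1 + s) ^ 2 * (1 + r ^ 2 + s ^ 2))
      - ((1 + r ^ 2 + s ^ 2)⁻¹ - 2 * ((1+s) * (1 + r ^ 2 + s ^ 2))⁻¹)
      = ((1+s)^2 * (1 + r^2 + s^2))⁻¹ := by
    field_simp
    ring
  nlinarith [key, inv_pos.2 (mul_pos (pow_pos h1 2) hd)]

lemma arctan_le_self' {y : ℝ} (hy : 0 ≤ y) : arctan y ≤ y := by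
  have h1 : 0 ≤ arctan y := by
    rw [← Real.arctan_zero]
    exact Real.arctan_strictMono.monotone hy
  calc arctan y ≤ Real.tan (arctan y) := Real.le_tan h1 (Real.arctan_lt_pi_div_two y)
    _ = y := Real.tan_arctan y

lemma arctan_ge_pi2_sub {x : ℝ} (hx : 0 < x) : π/2 - x⁻¹ ≤ arctan x := by
  have h := Real.arctan_inv_of_pos hx
  have h2 : arctan x⁻¹ ≤ x⁻¹ := arctan_le_self' (by positivity)
  linarith

lemma log_one_add_sq_le {K : ℝ} (hK : 1 ≤ K) :
    Real.log (1 + K^2) ≤ Real.log 2 + 2 * Real.log K := by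
  have h1 : Real.log (1 + K^2) ≤ Real.log (2 * K^2) :=
    Real.log_le_log (by positivity) (by nlinarith)
  rw [Real.log_mul two_ne_zero (by positivity), Real.log_pow] at h1
  push_cast at h1
  linarith

lemma log_le_half_log {K : ℝ} (hK : 1 ≤ K) : Real.log K ≤ 1/2 * Real.log (1 + K^2) := by
  have h1 : Real.log (K^2) ≤ Real.log (1 + K^2) :=
    Real.log_le_log (by positivity) (by nlinarith)
  rw [Real.log_pow] at h1
  push_cast at h1
  linarith

-- integrability helpers
lemma int_f1 (K r : ℝ) :
    IntervalIntegrable (fun s => s ^ 2 / ((1 + |s|) ^ 2 * (1 + r ^ 2 + s ^ 2)))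
      volume 0 K := by
  apply Continuous.intervalIntegrable
  apply Continuous.div
  · fun_prop
  · fun_prop
  · intro s
    have h1 : (0:ℝ) < (1 + |s|) ^ 2 := by positivity
    have h2 : (0:ℝ) < 1 + r ^ 2 + s ^ 2 := by positivity
    positivity

lemma int_f2 (K r : ℝ) :
    IntervalIntegrable (fun s => (1 + r ^ 2 + s ^ 2)⁻¹) volume 0 K := by
  apply Continuous.intervalIntegrable
  have : ∀ s : ℝ, 1 + r ^ 2 + s ^ 2 ≠ 0 := fun s => by positivity
  exact ((continuous_const.add (continuous_pow 2)).inv₀ this)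

lemma int_f3 (K : ℝ) (hK : 0 ≤ K) :
    IntervalIntegrable (fun s => ((1+s) * Real.sqrt (1+s))⁻¹) volume 0 K := by
  apply ContinuousOn.intervalIntegrable
  apply ContinuousOn.inv₀
  · exact (continuousOn_const.add continuousOn_id).mul
      ((continuousOn_const.add continuousOn_id).sqrt)
  · intro s hs
    rw [Set.uIcc_of_le hK] at hs
    have : (0:ℝ) < 1 + s := by linarith [hs.1]
    positivity

lemma inn_le (K r : ℝ) (hK : 0 ≤ K) :
    inn K r ≤ (Real.sqrt (1+r^2))⁻¹ * arctan (K / Real.sqrt (1+r^2)) := by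
  rw [← ftc_arctan (by positivity : (0:ℝ) < 1 + r^2) K]
  unfold inn
  apply integral_mono_on hK (int_f1 K r) (int_f2 K r)
  intro s hs
  exact ptwise_upper hs.1

lemma inn_ge (K r : ℝ) (hK : 0 ≤ K) (hr : 0 ≤ r) :
    (Real.sqrt (1+r^2))⁻¹ * arctan (K / Real.sqrt (1+r^2))
      - 12 * ((1+r) * Real.sqrt (1+r))⁻¹ ≤ inn K r := by
  set A := ((1+r) * Real.sqrt (1+r))⁻¹ with hA
  have hApos : 0 ≤ A := by
    rw [hA]
    positivity
  have hmono : ∫ s in (0:ℝ)..K, ((1 + r^2 + s^2)⁻¹ - 6 * A * ((1+s) * Real.sqrt (1+s))⁻¹)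
      ≤ inn K r := by
    unfold inn
    apply integral_mono_on hK ((int_f2 K r).sub ((int_f3 K hK).const_mul (6*A)))
      (int_f1 K r)
    intro s hs
    have h1 := ptwise_lower (r := r) hs.1
    have h2 := cross_bound hr hs.1
    have h3 : (0:ℝ) ≤ ((1+s) * Real.sqrt (1+s))⁻¹ := by
      have : (0:ℝ) < 1 + s := by linarith [hs.1]
      positivity
    rw [hA]
    linarith
  rw [integral_sub (int_f2 K r) ((int_f3 K hK).const_mul (6*A)),
    intervalIntegral.integral_const_mul, ftc_arctan (by positivity : (0:ℝ) < 1 + r^2) K,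
    ftc_32 K hK] at hmono
  have hsq : (0:ℝ) ≤ (Real.sqrt (1+K))⁻¹ := by positivity
  nlinarith [hmono, hApos, hsq]

lemma wfun_nonneg (r : ℝ) : 0 ≤ wfun r := by unfold wfun; positivity

lemma wfun_le_one (r : ℝ) : wfun r ≤ 1 := by
  unfold wfun
  rw [div_le_one (by positivity)]
  nlinarith [sq_nonneg r, sq_nonneg (r^2)]

lemma wsq_le {r : ℝ} (hr : 0 ≤ r) :
    wfun r * (Real.sqrt (1+r^2))⁻¹ ≤ r / (1+r^2) := by
  set u := Real.sqrt (1+r^2) with hu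
  have hup : 0 < u := Real.sqrt_pos.2 (by positivity)
  have hu2 : u^2 = 1 + r^2 := Real.sq_sqrt (by positivity)
  have hur : r ≤ u := by nlinarith [hu2, hup]
  have e : wfun r * u⁻¹ = r^4 / ((1+r^2)^2 * u) := by
    unfold wfun
    field_simp
  rw [e, div_le_div_iff₀ (by positivity) (by positivity)]
  nlinarith [mul_le_mul_of_nonneg_left hur (by positivity : (0:ℝ) ≤ r^3 * (1+r^2)), sq_nonneg r, hup.le, mul_nonneg (mul_nonneg hr hr) hup.le]

lemma wsq_ge {r : ℝ} (hr : 0 ≤ r) :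
    r / (1+r^2) - 3*r / (1+r^2)^2 ≤ wfun r * (Real.sqrt (1+r^2))⁻¹ := by
  set u := Real.sqrt (1+r^2) with hu
  have hup : 0 < u := Real.sqrt_pos.2 (by positivity)
  have hu2 : u^2 = 1 + r^2 := Real.sq_sqrt (by positivity)
  have key : r*u*(r^2-2) ≤ r^4 := by
    nlinarith [sq_nonneg (u - r), sq_nonneg (u*r - 1), mul_nonneg hr hup.le,
      sq_nonneg (u - 1), sq_nonneg (r*(u-r))]
  have e : wfun r * u⁻¹ = r^4 / ((1+r^2)^2 * u) := by
    unfold wfun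
    field_simp
  have e2 : r / (1+r^2) - 3*r / (1+r^2)^2 = (r*(1+r^2) - 3*r) / (1+r^2)^2 := by
    field_simp
  rw [e, e2, div_le_div_iff₀ (by positivity) (by positivity)]
  have := mul_le_mul_of_nonneg_right key (by positivity : (0:ℝ) ≤ (1+r^2)^2)
  nlinarith [this]

lemma I17_upper {K : ℝ} (hK : 1 ≤ K) : I17 K ≤ π/2 * Real.log K + 1 := by
  have hK0 : (0:ℝ) ≤ K := by linarith
  rw [I17_eq K hK0]
  have ia : IntervalIntegrable (fun r => π/2 * (r/(1+r^2))) volume 0 K := by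
    apply Continuous.intervalIntegrable
    exact continuous_const.mul (continuous_id.div
      (continuous_const.add (continuous_pow 2)) (fun r => by positivity))
  have step : (∫ r in (0:ℝ)..K, wfun r * inn K r)
      ≤ ∫ r in (0:ℝ)..K, π/2 * (r/(1+r^2)) := by
    apply integral_mono_on hK0 ((inn_cont K).intervalIntegrable 0 K) ia
    intro r hr
    have h1 := inn_le K r hK0
    have h2 : arctan (K / Real.sqrt (1+r^2)) ≤ π/2 :=
      (Real.arctan_lt_pi_div_two _).le
    have hsqi : (0:ℝ) ≤ (Real.sqrt (1+r^2))⁻¹ := by positivity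
    calc wfun r * inn K r
        ≤ wfun r * ((Real.sqrt (1+r^2))⁻¹ * arctan (K / Real.sqrt (1+r^2))) :=
          mul_le_mul_of_nonneg_left h1 (wfun_nonneg r)
      _ ≤ wfun r * ((Real.sqrt (1+r^2))⁻¹ * (π/2)) :=
          mul_le_mul_of_nonneg_left (mul_le_mul_of_nonneg_left h2 hsqi) (wfun_nonneg r)
      _ = π/2 * (wfun r * (Real.sqrt (1+r^2))⁻¹) := by ring
      _ ≤ π/2 * (r/(1+r^2)) :=
          mul_le_mul_of_nonneg_left (wsq_le hr.1) (by positivity)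
  rw [intervalIntegral.integral_const_mul, ftc_log] at step
  have hlog := log_one_add_sq_le hK
  have hl2 : Real.log 2 ≤ 1 := by
    have := Real.log_le_sub_one_of_pos (by norm_num : (0:ℝ) < 2)
    linarith
  nlinarith [step, Real.pi_le_four, Real.pi_pos]

lemma I17_lower {K : ℝ} (hK : 1 ≤ K) : π/2 * Real.log K - 33 ≤ I17 K := by
  have hK0 : (0:ℝ) ≤ K := by linarith
  have hKp : (0:ℝ) < K := by linarith
  rw [I17_eq K hK0]
  have ia : IntervalIntegrable (fun r => π/2 * (r/(1+r^2))) volume 0 K := by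
    apply Continuous.intervalIntegrable
    exact continuous_const.mul (continuous_id.div
      (continuous_const.add (continuous_pow 2)) (fun r => by positivity))
  have ib : IntervalIntegrable (fun r => π/2 * (3*r/(1+r^2)^2)) volume 0 K := by
    apply Continuous.intervalIntegrable
    exact continuous_const.mul ((continuous_const.mul continuous_id).div
      ((continuous_const.add (continuous_pow 2)).pow 2) (fun r => by positivity))
  have ic : IntervalIntegrable (fun _ : ℝ => K⁻¹) volume 0 K := intervalIntegrable_const
  have id12 : IntervalIntegrable (fun r => 12 * ((1+r) * Real.sqrt (1+r))⁻¹) volume 0 K :=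
    (int_f3 K hK0).const_mul 12
  have step : (∫ r in (0:ℝ)..K,
        (π/2 * (r/(1+r^2)) - π/2 * (3*r/(1+r^2)^2) - K⁻¹ - 12 * ((1+r) * Real.sqrt (1+r))⁻¹))
      ≤ ∫ r in (0:ℝ)..K, wfun r * inn K r := by
    apply integral_mono_on hK0 (((ia.sub ib).sub ic).sub id12)
      ((inn_cont K).intervalIntegrable 0 K)
    intro r hr
    have hr0 : 0 ≤ r := hr.1
    set u := Real.sqrt (1+r^2) with hu
    have hup : 0 < u := Real.sqrt_pos.2 (by positivity)
    set A := ((1+r) * Real.sqrt (1+r))⁻¹ with hA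
    have hApos : 0 ≤ A := by rw [hA]; positivity
    have h1 := inn_ge K r hK0 hr0
    have h2 : wfun r * (u⁻¹ * arctan (K/u) - 12*A) ≤ wfun r * inn K r :=
      mul_le_mul_of_nonneg_left h1 (wfun_nonneg r)
    have h3 : π/2 - u/K ≤ arctan (K/u) := by
      have := arctan_ge_pi2_sub (x := K/u) (by positivity)
      rwa [inv_div] at this
    have h4 : u⁻¹ * (π/2 - u/K) ≤ u⁻¹ * arctan (K/u) :=
      mul_le_mul_of_nonneg_left h3 (by positivity)
    have h5 : u⁻¹ * (π/2 - u/K) = π/2 * u⁻¹ - K⁻¹ := by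
      field_simp
    have h6 : π/2 * (r/(1+r^2) - 3*r/(1+r^2)^2) ≤ π/2 * (wfun r * u⁻¹) :=
      mul_le_mul_of_nonneg_left (wsq_ge hr0) (by positivity)
    have h7 : wfun r * (12*A) ≤ 12*A := by
      nlinarith [wfun_le_one r, wfun_nonneg r, hApos]
    have h8 : wfun r * (π/2 * u⁻¹ - K⁻¹) ≥ π/2 * (wfun r * u⁻¹) - K⁻¹ := by
      have h9 : wfun r * K⁻¹ ≤ K⁻¹ := by
        nlinarith [wfun_le_one r, wfun_nonneg r, inv_pos.2 hKp]
      nlinarith [h9]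
    have h10 : wfun r * (u⁻¹ * arctan (K/u)) ≥ wfun r * (u⁻¹ * (π/2 - u/K)) :=
      mul_le_mul_of_nonneg_left h4 (wfun_nonneg r)
    have e1 : wfun r * (u⁻¹ * arctan (K/u) - 12*A)
        = wfun r * (u⁻¹ * arctan (K/u)) - wfun r * (12*A) := by ring
    have e2 : wfun r * (u⁻¹ * (π/2 - u/K)) = wfun r * (π/2 * u⁻¹ - K⁻¹) := by rw [h5]
    linarith [h2, h6, h7, h8, h10, e1, e2]
  rw [integral_sub ((ia.sub ib).sub ic) id12, integral_sub (ia.sub ib) ic,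
    integral_sub ia ib, intervalIntegral.integral_const_mul, intervalIntegral.integral_const_mul, intervalIntegral.integral_const_mul,
    intervalIntegral.integral_const, ftc_log, ftc_q, ftc_32 K hK0] at step
  have hlog := log_le_half_log hK
  have h1 : (0:ℝ) ≤ (1+K^2)⁻¹ := by positivity
  have h2 : (0:ℝ) ≤ (Real.sqrt (1+K))⁻¹ := by positivity
  have h3 : (K - 0) • K⁻¹ = 1 := by
    rw [smul_eq_mul]
    field_simp
    ring
  rw [h3] at step
  nlinarith [step, Real.pi_le_four, Real.pi_pos, Real.log_nonneg hK]

lemma I17_near {K : ℝ} (hK : 1 ≤ K) : |I17 K - π/2 * Real.log K| ≤ 34 :=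
  abs_le.2 ⟨by linarith [I17_lower hK], by linarith [I17_upper hK]⟩

lemma part1 : Tendsto (fun K => I17 K / Real.log K) atTop (nhds (π / 2)) := by
  have h0 : Tendsto (fun K : ℝ => 34 / Real.log K) atTop (nhds 0) :=
    Tendsto.div_atTop tendsto_const_nhds Real.tendsto_log_atTop
  have h1 : Tendsto (fun K => I17 K / Real.log K - π/2) atTop (nhds 0) := by
    apply squeeze_zero_norm' _ h0
    filter_upwards [eventually_ge_atTop (3:ℝ)] with K hK3
    have hK1 : (1:ℝ) ≤ K := by linarith
    have hlog : 1 ≤ Real.log K := by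
      have h3 : Real.exp 1 < 3 := by
        have := Real.exp_one_lt_d9
        linarith
      have := (Real.lt_log_iff_exp_lt (by norm_num : (0:ℝ) < 3)).2 h3
      have hmono : Real.log 3 ≤ Real.log K := Real.log_le_log (by norm_num) hK3
      linarith
    have hlogpos : 0 < Real.log K := by linarith
    have e : I17 K / Real.log K - π/2 = (I17 K - π/2 * Real.log K) / Real.log K := by
      field_simp
    rw [Real.norm_eq_abs, e, abs_div, abs_of_pos hlogpos]
    gcongr
    exact I17_near hK1
  have h2 := h1.add_const (π/2)
  simp only [sub_add_cancel] at h2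
  simpa using h2

lemma tendsto_one_sub : Tendsto (fun l : ℝ => 1 - l) (nhdsWithin 1 (Set.Iio 1))
    (nhdsWithin 0 (Set.Ioi 0)) := by
  rw [tendsto_nhdsWithin_iff]
  constructor
  · exact ((continuous_const.sub continuous_id).tendsto' 1 0 (by norm_num)).mono_left
      nhdsWithin_le_nhds
  · exact eventually_nhdsWithin_of_forall (fun l hl => by
      simp only [Set.mem_Iio] at hl
      simp only [Set.mem_Ioi]
      linarith)

lemma tendsto_L : Tendsto (fun l : ℝ => Real.log (1 / (1 - l)))
    (nhdsWithin 1 (Set.Iio 1)) atTop := by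
  apply Real.tendsto_log_atTop.comp
  have h := tendsto_inv_nhdsGT_zero.comp tendsto_one_sub
  apply h.congr
  intro l
  simp [one_div, Function.comp]

lemma part2 {ε : ℝ} (hε : 0 < ε) :
    Tendsto (fun l : ℝ => I17 (ε / Real.sqrt (1 - l)) / Real.log (1 / (1 - l)))
      (nhdsWithin 1 (Set.Iio 1)) (nhds (π / 4)) := by
  set φ : ℝ → ℝ := fun l => ε / Real.sqrt (1 - l) with hφdef
  have hsq : Tendsto (fun l : ℝ => Real.sqrt (1 - l)) (nhdsWithin 1 (Set.Iio 1))
      (nhdsWithin 0 (Set.Ioi 0)) := by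
    rw [tendsto_nhdsWithin_iff]
    constructor
    · have : Tendsto Real.sqrt (nhds 0) (nhds 0) := by
        simpa using Real.continuous_sqrt.tendsto 0
      exact this.comp (tendsto_one_sub.mono_right nhdsWithin_le_nhds)
    · apply (tendsto_one_sub.eventually_mem self_mem_nhdsWithin).mono
      intro l hl
      simp only [Set.mem_Ioi] at hl ⊢
      exact Real.sqrt_pos.2 hl
  have hφ : Tendsto φ (nhdsWithin 1 (Set.Iio 1)) atTop := by
    have h1 := tendsto_inv_nhdsGT_zero.comp hsq
    have h2 := h1.const_mul_atTop hε
    apply h2.congr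
    intro l
    simp [hφdef, Function.comp, div_eq_mul_inv]
  have hcomp : Tendsto (fun l => I17 (φ l) / Real.log (φ l)) (nhdsWithin 1 (Set.Iio 1))
      (nhds (π / 2)) := part1.comp hφ
  have hL := tendsto_L
  -- ratio of logs tends to 1/2
  have hratio : Tendsto (fun l => Real.log (φ l) / Real.log (1 / (1 - l)))
      (nhdsWithin 1 (Set.Iio 1)) (nhds (1/2)) := by
    have h0 : Tendsto (fun l : ℝ => Real.log ε / Real.log (1 / (1 - l))
        + 1/2) (nhdsWithin 1 (Set.Iio 1)) (nhds (1/2)) := by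
      have := (Tendsto.div_atTop (tendsto_const_nhds (x := Real.log ε)) hL).add_const (1/2 : ℝ)
      simpa using this
    apply h0.congr'
    filter_upwards [eventually_nhdsWithin_of_forall
        (fun l (hl : l ∈ Set.Iio 1) => hl), hL.eventually_gt_atTop 0] with l hl hLpos
    have h1l : (0:ℝ) < 1 - l := by simp only [Set.mem_Iio] at hl; linarith
    have hsqp : 0 < Real.sqrt (1 - l) := Real.sqrt_pos.2 h1l
    have hlogφ : Real.log (φ l) = Real.log ε + 1/2 * Real.log (1 / (1 - l)) := by
      rw [hφdef]
      simp only
      rw [Real.log_div (ne_of_gt hε) (ne_of_gt hsqp), Real.log_sqrt h1l.le]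
      have e : Real.log (1 / (1 - l)) = -Real.log (1 - l) := by
        rw [one_div, Real.log_inv]
      rw [e]
      ring
    rw [hlogφ, add_div, mul_div_assoc, div_self (ne_of_gt hLpos), mul_one]
  have hfinal := hcomp.mul hratio
  have : (π/2) * (1/2 : ℝ) = π/4 := by ring
  rw [this] at hfinal
  apply hfinal.congr'
  filter_upwards [hφ.eventually_ge_atTop 3, hL.eventually_gt_atTop 0] with l hφ3 hLpos
  have hφ1 : (1:ℝ) ≤ φ l := by linarith
  have hlogφpos : 0 < Real.log (φ l) := Real.log_pos (by linarith)
  rw [div_mul_div_comm]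
  rw [mul_comm (I17 (φ l)) (Real.log (φ l)), mul_div_mul_left _ _ (ne_of_gt hlogφpos)]

/-- `∫_0^K ∫_0^K r⁴s²/[(1+r²)²(1+s)²(1+r²+s²)] ∼ (π/2) log K` as `K → ∞`; with
`K = ε/√(1−λ)` this is `∼ (π/4) log(1/(1−λ))` as `λ ↑ 1`. -/
theorem stmt_17 :
    Tendsto (fun K => I17 K / Real.log K) atTop (nhds (π / 2))
    ∧ ∀ ε : ℝ, 0 < ε →
      Tendsto (fun l : ℝ => I17 (ε / Real.sqrt (1 - l)) / Real.log (1 / (1 - l)))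
        (nhdsWithin 1 (Set.Iio 1)) (nhds (π / 4)) :=
  ⟨part1, fun _ hε => part2 hε⟩
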